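/- Let A and B be abelian groups and let Γ be an infinite finitely generated group. If the wreath product (A × B) ≀ Γ is Hopfian, then A ≀ Γ and B ≀ Γ are Hopfian. -/

import Mathlib

/-- A group is Hopfian if every surjective endomorphism is injective. -/
def IsHopfian (G : Type*) [Group G] : Prop :=
  ∀ φ : G →* G, Function.Surjective φ → Function.Injective φ

/-- A unital ring is directly finite if `x * y = 1` implies `y * x = 1`. -/
def DirectlyFinite (R : Type*) [Ring R] : Prop :=
  ∀ x y : R, x * y = 1 → y * x = 1

/-- The action of `Γ` on the base group `Γ →₀ A` of the wreath product,
given by `(g • f) x = f (g⁻¹ * x)`. -/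
noncomputable def wreathAction (A : Type*) [AddCommGroup A] (Γ : Type*) [Group Γ] :
    Γ →* MulAut (Multiplicative (Γ →₀ A)) where
  toFun g := AddEquiv.toMultiplicative (Finsupp.domCongr (Equiv.mulLeft g))
  map_one' := by
    apply MulEquiv.ext
    intro f
    apply Multiplicative.toAdd.injective
    apply Finsupp.ext
    intro x
    simp [Finsupp.domCongr_apply]
    rfl
  map_mul' g₁ g₂ := by
    apply MulEquiv.ext
    intro f
    apply Multiplicative.toAdd.injective
    apply Finsupp.ext
    intro x
    simp [Finsupp.domCongr_apply, mul_assoc]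
    rfl

/-- The (restricted) wreath product `A ≀ Γ`: the semidirect product of the group
`Γ →₀ A` of finitely supported functions `Γ → A` (pointwise addition) by `Γ`,
acting by `(g • f) x = f (g⁻¹ * x)`. -/
abbrev WreathProduct (A : Type*) [AddCommGroup A] (Γ : Type*) [Group Γ] : Type _ :=
  SemidirectProduct (Multiplicative (Γ →₀ A)) Γ (wreathAction A Γ)

/-- The base group `Γ →₀ A` of the wreath product, as a subgroup of `A ≀ Γ`. -/
noncomputable def WreathProduct.base (A : Type*) [AddCommGroup A] (Γ : Type*) [Group Γ] :
    Subgroup (WreathProduct A Γ) :=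
  (SemidirectProduct.inl : Multiplicative (Γ →₀ A) →* WreathProduct A Γ).range

namespace WreathAux

open Finsupp SemidirectProduct Multiplicative

variable {A : Type*} [AddCommGroup A] {Γ : Type*} [Group Γ]

/-- Translation action of `Γ` on `Γ →₀ A`. -/
noncomputable def sm (g : Γ) (f : Γ →₀ A) : Γ →₀ A :=
  Finsupp.equivMapDomain (Equiv.mulLeft g) f

@[simp] lemma sm_apply (g : Γ) (f : Γ →₀ A) (x : Γ) : sm g f x = f (g⁻¹ * x) := by
  simp [sm, Finsupp.equivMapDomain_apply]

@[simp] lemma sm_add (g : Γ) (f f' : Γ →₀ A) : sm g (f + f') = sm g f + sm g f' := by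
  ext x; simp

@[simp] lemma sm_zero (g : Γ) : sm g (0 : Γ →₀ A) = 0 := by ext x; simp

@[simp] lemma sm_neg (g : Γ) (f : Γ →₀ A) : sm g (-f) = -(sm g f) := by ext x; simp

@[simp] lemma sm_sub (g : Γ) (f f' : Γ →₀ A) : sm g (f - f') = sm g f - sm g f' := by
  ext x; simp

lemma sm_single (g x : Γ) (a : A) : sm g (Finsupp.single x a) = Finsupp.single (g * x) a := by
  simp [sm, Finsupp.equivMapDomain_single]

@[simp] lemma sm_sm (g h : Γ) (f : Γ →₀ A) : sm g (sm h f) = sm (g * h) f := by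
  ext x; simp [mul_assoc]

@[simp] lemma sm_one (f : Γ →₀ A) : sm (1 : Γ) f = f := by ext x; simp

lemma wreathAction_apply (g : Γ) (l : Multiplicative (Γ →₀ A)) :
    wreathAction A Γ g l = Multiplicative.ofAdd (sm g l.toAdd) := rfl

/-- A base element of the wreath product. -/
noncomputable def bse (f : Γ →₀ A) : WreathProduct A Γ := inl (Multiplicative.ofAdd f)

/-- The additive left component. -/
def lf (x : WreathProduct A Γ) : Γ →₀ A := Multiplicative.toAdd x.left

@[simp] lemma lf_mul (x y : WreathProduct A Γ) :
    lf (x * y) = lf x + sm x.right (lf y) := by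
  show Multiplicative.toAdd (x.left * wreathAction A Γ x.right y.left) = _
  rw [wreathAction_apply]
  simp [lf]

@[simp] lemma lf_inv (x : WreathProduct A Γ) : lf x⁻¹ = -(sm x.right⁻¹ (lf x)) := by
  show Multiplicative.toAdd ((wreathAction A Γ x.right⁻¹) x.left⁻¹) = _
  rw [wreathAction_apply]
  simp [lf]

@[simp] lemma lf_one : lf (1 : WreathProduct A Γ) = 0 := rfl

@[simp] lemma lf_bse (f : Γ →₀ A) : lf (bse f) = f := rfl

@[simp] lemma right_bse (f : Γ →₀ A) : (bse f).right = 1 := rfl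

@[simp] lemma lf_inr (g : Γ) : lf (inr g : WreathProduct A Γ) = 0 := rfl

lemma wp_ext {x y : WreathProduct A Γ} (h1 : lf x = lf y) (h2 : x.right = y.right) :
    x = y := by
  cases x; cases y
  exact SemidirectProduct.ext (Multiplicative.toAdd.injective h1) h2

lemma bse_add (f g : Γ →₀ A) : bse (f + g) = bse f * bse g := by
  apply wp_ext <;> simp

lemma bse_conj (x : WreathProduct A Γ) (f : Γ →₀ A) :
    x * bse f * x⁻¹ = bse (sm x.right f) := by
  apply wp_ext
  · simp [sm_sm]
  · simp

lemma eq_bse (x : WreathProduct A Γ) (h : x.right = 1) : x = bse (lf x) := by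
  apply wp_ext <;> simp [h]

lemma bse_eq_inl (x : WreathProduct A Γ) : inl x.left = bse (lf x) := by
  apply wp_ext <;> simp [lf, bse]

end WreathAux

namespace WreathAux

open Finsupp SemidirectProduct Multiplicative

variable {A : Type*} [AddCommGroup A] {Γ : Type*} [Group Γ]
variable {Δ : Type*} [Group Δ]

lemma mapDomain_sm (β : Γ →* Δ) (g : Γ) (f : Γ →₀ A) :
    Finsupp.mapDomain β (sm g f) = sm (β g) (Finsupp.mapDomain β f) := by
  have h1 : sm g f = Finsupp.mapDomain (fun x => g * x) f := by
    rw [sm, Finsupp.equivMapDomain_eq_mapDomain]; rfl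
  have h2 : sm (β g) (Finsupp.mapDomain β f) = Finsupp.mapDomain (fun x => β g * x)
      (Finsupp.mapDomain β f) := by
    rw [sm, Finsupp.equivMapDomain_eq_mapDomain]; rfl
  rw [h1, h2, ← Finsupp.mapDomain_comp, ← Finsupp.mapDomain_comp]
  congr 1
  funext x
  simp [Function.comp, map_mul]

/-- Functoriality of the wreath product in the group `Γ`. -/
noncomputable def wreathMap (β : Γ →* Δ) : WreathProduct A Γ →* WreathProduct A Δ :=
  SemidirectProduct.map
    (AddMonoidHom.toMultiplicative (Finsupp.mapDomain.addMonoidHom (β : Γ → Δ))) β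
    (by
      intro g
      refine MonoidHom.ext fun l => ?_
      show Multiplicative.ofAdd (Finsupp.mapDomain β (Multiplicative.toAdd
        ((wreathAction A Γ g) l))) = _
      rw [wreathAction_apply]
      simp only [toAdd_ofAdd]
      rw [mapDomain_sm]
      rfl)

@[simp] lemma wreathMap_bse (β : Γ →* Δ) (f : Γ →₀ A) :
    wreathMap β (bse f) = bse (Finsupp.mapDomain β f) := by
  show SemidirectProduct.map _ _ _ (inl _) = _
  rw [SemidirectProduct.map_inl]
  rfl

@[simp] lemma wreathMap_inr (β : Γ →* Δ) (g : Γ) :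
    wreathMap β (inr g : WreathProduct A Γ) = inr (β g) := by
  exact SemidirectProduct.map_inr _ _ _ g

lemma mapDomain_surjective {β : Γ → Δ} (hβ : Function.Surjective β) :
    Function.Surjective (Finsupp.mapDomain (M := A) β) := by
  intro l
  refine ⟨Finsupp.mapDomain (Function.surjInv hβ) l, ?_⟩
  rw [← Finsupp.mapDomain_comp]
  have : β ∘ Function.surjInv hβ = id := funext fun x => Function.surjInv_eq hβ x
  rw [this, Finsupp.mapDomain_id]

lemma wreathMap_surjective {β : Γ →* Δ} (hβ : Function.Surjective β) :
    Function.Surjective (wreathMap (A := A) β) := by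
  intro y
  obtain ⟨f, hf⟩ := mapDomain_surjective (A := A) hβ (lf y)
  obtain ⟨g, hg⟩ := hβ y.right
  refine ⟨bse f * inr g, ?_⟩
  rw [map_mul, wreathMap_bse, wreathMap_inr, hf, hg]
  apply wp_ext <;> simp

/-- Sum-of-values homomorphism. -/
noncomputable def eps : (Γ →₀ A) →+ A := Finsupp.liftAddHom (fun _ => AddMonoidHom.id A)

@[simp] lemma eps_single (x : Γ) (a : A) : eps (Finsupp.single x a) = a := by
  simp [eps, Finsupp.liftAddHom_apply_single]

lemma eps_sm (g : Γ) (f : Γ →₀ A) : eps (sm g f) = eps f := by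
  induction f using Finsupp.induction with
  | zero => simp
  | single_add x a f _ _ ih =>
    rw [sm_add, map_add, map_add, ih, sm_single, eps_single, eps_single]

/-- The homomorphism `A ≀ Γ →* A × Γ` given by augmentation and projection. -/
noncomputable def epshat : WreathProduct A Γ →* Multiplicative A × Γ where
  toFun x := (Multiplicative.ofAdd (eps (lf x)), x.right)
  map_one' := by
    refine Prod.ext ?_ rfl
    show Multiplicative.ofAdd (eps (lf (1 : WreathProduct A Γ))) = 1
    simp
  map_mul' x y := by
    refine Prod.ext ?_ rfl
    show Multiplicative.ofAdd (eps (lf (x * y))) =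
      Multiplicative.ofAdd (eps (lf x)) * Multiplicative.ofAdd (eps (lf y))
    rw [lf_mul, map_add, eps_sm, ← ofAdd_add]

@[simp] lemma epshat_bse (f : Γ →₀ A) :
    epshat (bse f) = (Multiplicative.ofAdd (eps f), 1) := rfl

@[simp] lemma epshat_inr (g : Γ) :
    epshat (inr g : WreathProduct A Γ) = (1, g) := by
  refine Prod.ext ?_ rfl
  show Multiplicative.ofAdd (eps (lf (inr g : WreathProduct A Γ))) = 1
  simp

lemma epshat_surjective : Function.Surjective (epshat (A := A) (Γ := Γ)) := by
  rintro ⟨a, g⟩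
  refine ⟨bse (Finsupp.single 1 a.toAdd) * inr g, ?_⟩
  rw [map_mul, epshat_bse, epshat_inr]
  simp

lemma sm_invariant_eq_zero [Infinite Γ] {w : Γ →₀ A} (h : ∀ δ : Γ, sm δ w = w) : w = 0 := by
  by_contra hw
  obtain ⟨x₀, hx₀⟩ : ∃ x₀, w x₀ ≠ 0 := by
    by_contra hall
    push_neg at hall
    exact hw (Finsupp.ext fun x => hall x)
  have hval : ∀ z : Γ, w z = w x₀ := by
    intro z
    have := h (z * x₀⁻¹)
    have h2 := DFunLike.congr_fun this z
    rw [sm_apply] at h2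
    simpa using h2.symm
  have hsub : (Set.univ : Set Γ) ⊆ ↑w.support := by
    intro z _
    simp only [Finset.coe_sort_coe, Finset.mem_coe, Finsupp.mem_support_iff]
    rw [hval z]; exact hx₀
  exact (Set.infinite_univ (α := Γ)).mono hsub w.support.finite_toSet

lemma central_eq_one [Infinite Γ] {a₀ : A} (ha : a₀ ≠ 0) {z : WreathProduct A Γ}
    (hz : ∀ y, z * y = y * z) : z = 1 := by
  have hr : z.right = 1 := by
    have h1 := hz (bse (Finsupp.single 1 a₀))
    have h2 : lf (z * bse (Finsupp.single 1 a₀)) = lf (bse (Finsupp.single 1 a₀) * z) := by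
      rw [h1]
    simp only [lf_mul, lf_bse, right_bse, sm_one, sm_single, mul_one] at h2
    have h3 : Finsupp.single z.right a₀ = Finsupp.single 1 a₀ := by
      have := h2
      rw [add_comm (Finsupp.single 1 a₀) (lf z)] at this
      exact add_left_cancel this
    rcases (Finsupp.single_eq_single_iff _ _ _ _).mp h3 with ⟨h, _⟩ | ⟨h, _⟩
    · exact h
    · exact absurd h ha
  have hl : lf z = 0 := by
    apply sm_invariant_eq_zero (A := A)
    intro δ
    have h1 := hz (inr δ)
    have h2 : lf (inr δ * z) = lf (z * inr δ) := by rw [h1]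
    simpa [hr] using h2
  apply wp_ext <;> simp [hl, hr]

lemma mapDomain_eq_zero_of_invol (q : Γ →* Δ) {t : Γ} (ht1 : t ≠ 1) (htt : t * t = 1)
    (hq : q t = 1) (h2 : ∀ a : A, a + a = 0) :
    ∀ m : Γ →₀ A, sm t m = m → Finsupp.mapDomain q m = 0 := by
  classical
  have htinv : t⁻¹ = t := by
    rw [← mul_one t⁻¹, ← htt, ← mul_assoc, inv_mul_cancel, one_mul]
  suffices H : ∀ n : ℕ, ∀ m : Γ →₀ A, m.support.card ≤ n → sm t m = m →
      Finsupp.mapDomain q m = 0 by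
    exact fun m hm => H m.support.card m le_rfl hm
  intro n
  induction n with
  | zero =>
    intro m hcard _
    have : m = 0 := by
      rwa [Nat.le_zero, Finset.card_eq_zero, Finsupp.support_eq_empty] at hcard
    simp [this]
  | succ n ih =>
    intro m hcard hinv
    by_cases hm : m = 0
    · simp [hm]
    obtain ⟨x, hx⟩ : ∃ x, m x ≠ 0 := by
      by_contra hall
      push_neg at hall
      exact hm (Finsupp.ext fun x => hall x)
    set a := m x with ha
    have hvals : ∀ z, m (t * z) = m z := by
      intro z
      have := DFunLike.congr_fun hinv (t * z)
      rw [sm_apply, htinv, ← mul_assoc, htt, one_mul] at this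
      exact this.symm
    have htx : t * x ≠ x := by
      intro hcon
      exact ht1 (mul_right_cancel (hcon.trans (one_mul x).symm))
    set m' := m - Finsupp.single x a - Finsupp.single (t * x) a with hm'
    have hminv' : sm t m' = m' := by
      ext z
      rw [sm_apply, htinv]
      rw [hm', Finsupp.sub_apply, Finsupp.sub_apply, Finsupp.sub_apply, Finsupp.sub_apply]
      rw [hvals z]
      have e1 : (Finsupp.single x a) (t * z) = (Finsupp.single (t * x) a) z := by
        rw [Finsupp.single_apply, Finsupp.single_apply]
        by_cases h : x = t * z
        · rw [if_pos h, if_pos (by rw [h, ← mul_assoc, htt, one_mul])]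
        · rw [if_neg h, if_neg (fun hc => h (by rw [← hc, ← mul_assoc, htt, one_mul]))]
      have e2 : (Finsupp.single (t * x) a) (t * z) = (Finsupp.single x a) z := by
        rw [Finsupp.single_apply, Finsupp.single_apply]
        by_cases h : x = z
        · rw [if_pos (by rw [h]), if_pos h]
        · rw [if_neg (fun hc => h (mul_left_cancel hc)), if_neg h]
      rw [e1, e2, sub_sub, sub_sub, add_comm]
    have hm'x : m' x = 0 := by
      rw [hm', Finsupp.sub_apply, Finsupp.sub_apply, Finsupp.single_apply, Finsupp.single_apply,
        if_pos rfl, if_neg htx, ← ha]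
      simp
    have hsupp : m'.support ⊆ m.support.erase x := by
      intro z hz
      rw [Finsupp.mem_support_iff] at hz
      rw [Finset.mem_erase, Finsupp.mem_support_iff]
      refine ⟨fun hzx => hz (by rw [hzx]; exact hm'x), fun hmz => hz ?_⟩
      rw [hm', Finsupp.sub_apply, Finsupp.sub_apply, hmz, Finsupp.single_apply,
        Finsupp.single_apply]
      rw [if_neg (fun h1 : x = z => hx (by rw [ha, h1, hmz])),
        if_neg (fun h2 : t * x = z => hx (by rw [ha, ← hvals x, h2, hmz]))]
      simp
    have hcard' : m'.support.card ≤ n := by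
      have h1 : (m.support.erase x).card < m.support.card :=
        Finset.card_erase_lt_of_mem (Finsupp.mem_support_iff.mpr hx)
      have := Finset.card_le_card hsupp
      omega
    have hmsplit : m = m' + Finsupp.single x a + Finsupp.single (t * x) a := by
      rw [hm']; abel
    rw [hmsplit, Finsupp.mapDomain_add, Finsupp.mapDomain_add, ih m' hcard' hminv',
      Finsupp.mapDomain_single, Finsupp.mapDomain_single]
    have : q (t * x) = q x := by rw [map_mul, hq, one_mul]
    rw [this, zero_add, ← Finsupp.single_add, h2 a, Finsupp.single_zero]

end WreathAux

namespace WreathAux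

open Finsupp SemidirectProduct Multiplicative

variable {A : Type*} [AddCommGroup A] {Γ : Type*} [Group Γ]

lemma split (x : WreathProduct A Γ) : x = bse (lf x) * inr x.right := by
  apply wp_ext <;> simp

lemma bse_zero : bse (0 : Γ →₀ A) = 1 := by apply wp_ext <;> simp

theorem base_preserved [Infinite Γ] [Group.FG Γ]
    (φ : WreathProduct A Γ →* WreathProduct A Γ) (hφ : Function.Surjective φ) :
    ∀ f : Γ →₀ A, (φ (bse f)).right = 1 := by
  classical
  by_contra hcon
  push_neg at hcon
  obtain ⟨f₀, ht⟩ := hcon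
  set t := (φ (bse f₀)).right with ht_def
  set InN : WreathProduct A Γ → Prop := fun x => ∃ f, φ (bse f) = x with hInN
  have hN_u₀ : InN (φ (bse f₀)) := ⟨f₀, rfl⟩
  have hN_mul : ∀ {x y}, InN x → InN y → InN (x * y) := by
    rintro x y ⟨f, rfl⟩ ⟨g, rfl⟩
    exact ⟨f + g, by rw [bse_add, map_mul]⟩
  have hN_inv : ∀ {x}, InN x → InN x⁻¹ := by
    rintro x ⟨f, rfl⟩
    refine ⟨-f, ?_⟩
    rw [← map_inv]
    congr 1
    apply wp_ext <;> simp
  have hN_conj : ∀ (x : WreathProduct A Γ) {n}, InN n → InN (x * n * x⁻¹) := by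
    rintro x n ⟨f, rfl⟩
    obtain ⟨y, rfl⟩ := hφ x
    refine ⟨sm y.right f, ?_⟩
    rw [← bse_conj, map_mul, map_mul, map_inv]
  have hN_comm : ∀ {x y}, InN x → InN y → x * y = y * x := by
    rintro x y ⟨f, rfl⟩ ⟨g, rfl⟩
    rw [← map_mul, ← map_mul, ← bse_add, ← bse_add, add_comm]
  obtain ⟨a₀, ha₀⟩ : ∃ a : A, a ≠ 0 := by
    by_contra hall
    push_neg at hall
    apply ht
    have hf0 : f₀ = 0 := Finsupp.ext fun x => hall _
    rw [ht_def, hf0, bse_zero, map_one]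
    rfl
  -- key relation coming from commutativity of φ(base)
  have key : ∀ {x y}, InN x → InN y → ∀ b : Γ →₀ A,
      sm y.right (b - sm x.right b) = b - sm x.right b := by
    intro x y hx hy b
    have hc : InN (bse b * x * (bse b)⁻¹ * x⁻¹) :=
      hN_mul (hN_conj (bse b) hx) (hN_inv hx)
    have hcb : bse b * x * (bse b)⁻¹ * x⁻¹ = bse (b - sm x.right b) := by
      apply wp_ext
      · simp [sm_sm]
        abel
      · simp
    rw [hcb] at hc
    have hcomm := hN_comm hc hy
    have h1 : lf (bse (b - sm x.right b) * y) = lf (y * bse (b - sm x.right b)) := by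
      rw [hcomm]
    simp only [lf_mul, lf_bse, right_bse, sm_one] at h1
    rw [add_comm (b - sm x.right b) (lf y)] at h1
    exact (add_left_cancel h1).symm
  -- A has exponent 2
  have h2 : ∀ a : A, a + a = 0 := by
    intro a
    have hk := key hN_u₀ hN_u₀ (Finsupp.single 1 a)
    have hval := DFunLike.congr_fun hk t
    rw [sm_apply, inv_mul_cancel, sm_single, mul_one] at hval
    rw [Finsupp.sub_apply, Finsupp.sub_apply, Finsupp.single_apply, Finsupp.single_apply,
      Finsupp.single_apply, Finsupp.single_apply] at hval
    rw [if_pos rfl, if_neg ht, if_neg (fun h : (1 : Γ) = t => ht h.symm), if_pos rfl] at hval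
    rw [sub_zero, zero_sub] at hval
    exact eq_neg_iff_add_eq_zero.mp hval
  -- t is an involution
  have htt : t * t = 1 := by
    by_cases hcase : t = t⁻¹
    · nth_rewrite 2 [hcase]
      exact mul_inv_cancel t
    exfalso
    have hk := key hN_u₀ hN_u₀ (Finsupp.single 1 a₀)
    have hval := DFunLike.congr_fun hk 1
    rw [sm_apply, mul_one, sm_single, mul_one] at hval
    rw [Finsupp.sub_apply, Finsupp.sub_apply, Finsupp.single_apply, Finsupp.single_apply,
      Finsupp.single_apply, Finsupp.single_apply] at hval
    rw [if_neg (fun h : (1 : Γ) = t⁻¹ => ht (inv_eq_one.mp h.symm)),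
      if_neg (fun h : t = t⁻¹ => hcase h), if_pos rfl, if_neg ht] at hval
    apply ha₀
    simpa using hval.symm
  have htinv : t⁻¹ = t := inv_eq_of_mul_eq_one_right htt
  -- all right components of φ(base) lie in {1, t}
  have hS : ∀ {x}, InN x → x.right = 1 ∨ x.right = t := by
    intro x hx
    by_contra hboth
    push_neg at hboth
    obtain ⟨hs1, hst⟩ := hboth
    have hk := key hN_u₀ hx (Finsupp.single 1 a₀)
    have hval := DFunLike.congr_fun hk 1
    rw [sm_apply, mul_one, sm_single, mul_one] at hval
    rw [Finsupp.sub_apply, Finsupp.sub_apply, Finsupp.single_apply, Finsupp.single_apply,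
      Finsupp.single_apply, Finsupp.single_apply] at hval
    rw [if_neg (fun h : (1 : Γ) = x.right⁻¹ => hs1 (inv_eq_one.mp h.symm)),
      if_neg (fun h : t = x.right⁻¹ => hst (by rw [← inv_inv x.right, ← h, htinv])),
      if_pos rfl, if_neg ht] at hval
    simp only [sub_zero, zero_sub, neg_zero] at hval
    exact ha₀ hval.symm
  -- t is central
  have htc : ∀ δ : Γ, δ * t = t * δ := by
    intro δ
    have hc := hN_conj (inr δ) hN_u₀
    have hcr : (inr δ * φ (bse f₀) * (inr δ)⁻¹).right = δ * t * δ⁻¹ := by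
      simp [← ht_def]
    rcases hS hc with h | h
    · exfalso
      apply ht
      rw [hcr] at h
      have h' := congrArg (fun z => δ⁻¹ * z * δ) h
      simpa [mul_assoc] using h'
    · rw [hcr] at h
      have h' := congrArg (fun z => z * δ) h
      simpa [mul_assoc] using h'
  -- left parts of φ(base) are t-invariant
  have hfix : ∀ {x}, InN x → sm t (lf x) = lf x := by
    intro x hx
    rcases hS hx with h1 | hT
    · have hcomm := hN_comm hx hN_u₀
      have h := congrArg lf hcomm
      simp only [lf_mul, h1, sm_one, ← ht_def] at h
      rw [add_comm (lf x)] at h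
      exact (add_left_cancel h).symm
    · have hw : ∀ δ : Γ, sm δ (lf x - sm t (lf x)) = lf x - sm t (lf x) := by
        intro δ
        have hc := hN_conj (inr δ) hx
        have hcr : (inr δ * x * (inr δ)⁻¹).right = t := by
          simp only [mul_right, right_inr, inv_right, hT]
          rw [htc δ, mul_assoc, mul_inv_cancel, mul_one]
        have hcl : lf (inr δ * x * (inr δ)⁻¹) = sm δ (lf x) := by
          simp [hT]
        have hcomm := hN_comm hx hc
        have h := congrArg lf hcomm
        simp only [lf_mul, hT, hcr, hcl] at h
        -- h : lf x + sm t (sm δ (lf x)) = sm δ (lf x) + sm t (lf x)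
        rw [sm_sub, sm_sm, htc δ, ← sm_sm, sub_eq_sub_iff_add_eq_add]
        -- goal : sm δ (lf x) + sm t (lf x) = lf x + sm t (sm δ (lf x))
        exact h.symm
      have hzero := sm_invariant_eq_zero (fun δ => hw δ)
      rw [sub_eq_zero] at hzero
      exact hzero.symm
  -- the quotient by the central subgroup generated by t
  have htZ : ∀ g : Γ, Commute g t := fun g => htc g
  set H : Subgroup Γ := Subgroup.zpowers t with hH
  haveI hHnorm : H.Normal := by
    constructor
    intro n hn g
    rw [hH, Subgroup.mem_zpowers_iff] at hn
    obtain ⟨k, rfl⟩ := hn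
    rw [hH, Subgroup.mem_zpowers_iff]
    refine ⟨k, ?_⟩
    rw [((htZ g).zpow_right k).eq, mul_assoc, mul_inv_cancel, mul_one]
  haveI : Infinite (Γ ⧸ H) := by
    have hord : IsOfFinOrder t :=
      isOfFinOrder_iff_pow_eq_one.mpr ⟨2, by norm_num, by rw [pow_two]; exact htt⟩
    haveI hfin : Finite H := Set.Finite.to_subtype hord.finite_zpowers
    by_contra hinf
    rw [not_infinite_iff_finite] at hinf
    have : Finite Γ :=
      Finite.of_equiv _ (Subgroup.groupEquivQuotientProdSubgroup (s := H)).symm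
    exact not_finite Γ
  set q := QuotientGroup.mk' H with hq_def
  have hq_t : q t = 1 := by
    rw [hq_def, QuotientGroup.mk'_apply, QuotientGroup.eq_one_iff]
    exact Subgroup.mem_zpowers t
  set τ := wreathMap (A := A) q with hτ
  have hvan : ∀ f : Γ →₀ A, τ (φ (bse f)) = 1 := by
    intro f
    have hx : InN (φ (bse f)) := ⟨f, rfl⟩
    set x := φ (bse f) with hxd
    have hxr : q x.right = 1 := by
      rcases hS hx with h | h
      · rw [h, map_one]
      · rw [h, hq_t]
    have hxl : Finsupp.mapDomain q (lf x) = 0 :=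
      mapDomain_eq_zero_of_invol q ht htt hq_t h2 (lf x) (hfix hx)
    rw [split x, map_mul, hτ, wreathMap_bse, wreathMap_inr, hxl, hxr, bse_zero, one_mul,
      map_one]
  set Ψ : Γ →* WreathProduct A (Γ ⧸ H) := (τ.comp φ).comp inr with hΨdef
  have hΨapp : ∀ γ : Γ, Ψ γ = τ (φ (inr γ)) := fun _ => rfl
  have hΨsurj : Function.Surjective Ψ := by
    intro y
    obtain ⟨z, hz⟩ := wreathMap_surjective (A := A) (QuotientGroup.mk'_surjective H) y
    obtain ⟨x, hx⟩ := hφ z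
    refine ⟨x.right, ?_⟩
    rw [hΨapp, ← hz, ← hx, hτ]
    nth_rewrite 2 [split x]
    rw [map_mul, map_mul]
    rw [show wreathMap q (φ (bse (lf x))) = 1 from hvan (lf x), one_mul]
  have hΨt : Ψ t = 1 := by
    apply central_eq_one (Γ := Γ ⧸ H) ha₀
    intro y
    obtain ⟨γ, rfl⟩ := hΨsurj y
    rw [← map_mul, ← map_mul, htc γ]
  have hker : ∀ x ∈ H, Ψ x = 1 := by
    intro x hx
    rw [hH, Subgroup.mem_zpowers_iff] at hx
    obtain ⟨k, rfl⟩ := hx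
    rw [map_zpow, hΨt, one_zpow]
  set Ψ' : (Γ ⧸ H) →* WreathProduct A (Γ ⧸ H) := QuotientGroup.lift H Ψ hker with hΨ'def
  have hΨ'surj : Function.Surjective Ψ' := by
    intro y
    obtain ⟨γ, hγ⟩ := hΨsurj y
    exact ⟨QuotientGroup.mk γ, hγ⟩
  -- A is a vector space over ZMod 2 and admits a nonzero functional
  letI : Module (ZMod 2) A :=
    AddCommGroup.zmodModule (n := 2) (by intro x; rw [two_smul]; exact h2 x)
  have hc2 : ∀ c : ZMod 2, c = 0 ∨ c = 1 := by decide
  obtain ⟨g0, hg0⟩ : ∃ g0 : A →ₗ[ZMod 2] ZMod 2, g0 a₀ = 1 := by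
    have hinj : LinearMap.ker (LinearMap.toSpanSingleton (ZMod 2) A a₀) = ⊥ := by
      rw [LinearMap.ker_eq_bot']
      intro c hc
      rcases hc2 c with rfl | rfl
      · rfl
      · exfalso
        apply ha₀
        simpa [LinearMap.toSpanSingleton_apply] using hc
    obtain ⟨g0, hg0⟩ := LinearMap.exists_leftInverse_of_injective _ hinj
    refine ⟨g0, ?_⟩
    have h1 := DFunLike.congr_fun hg0 (1 : ZMod 2)
    simpa [LinearMap.toSpanSingleton_apply] using h1
  set ν : Multiplicative A →* Multiplicative (ZMod 2) :=
    AddMonoidHom.toMultiplicative g0.toAddMonoidHom with hνdef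
  have hν₀ : ν (Multiplicative.ofAdd a₀) = Multiplicative.ofAdd (1 : ZMod 2) := by
    simp [hνdef, hg0]
  have hνne : ν (Multiplicative.ofAdd a₀) ≠ 1 := by
    rw [hν₀]
    intro hcon
    have : (1 : ZMod 2) = 0 := by exact_mod_cast ofAdd_eq_one.mp hcon
    simp at this
  set S : (Γ ⧸ H) →* Multiplicative A × (Γ ⧸ H) := epshat.comp Ψ' with hSdef
  have hSsurj : Function.Surjective S := by
    intro z
    obtain ⟨u, hu⟩ := epshat_surjective z
    obtain ⟨v, hv⟩ := hΨ'surj u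
    exact ⟨v, by rw [hSdef, MonoidHom.comp_apply, hv, hu]⟩
  -- finiteness of the Hom monoid
  haveI hfinHom : Finite ((Γ ⧸ H) →* Multiplicative (ZMod 2)) := by
    obtain ⟨T, hT, hTfin⟩ := Group.fg_iff.mp (inferInstance : Group.FG (Γ ⧸ H))
    haveI := hTfin.to_subtype
    refine Finite.of_injective (fun h => (fun s : T => h s)) ?_
    intro h1 h2 hh
    refine MonoidHom.ext fun γ => ?_
    have hmem : γ ∈ Subgroup.closure T := by rw [hT]; trivial
    induction hmem using Subgroup.closure_induction with
    | mem x hx => exact congrFun hh ⟨x, hx⟩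
    | one => rw [map_one, map_one]
    | mul x y hx hy ihx ihy => rw [map_mul, map_mul, ihx, ihy]
    | inv x hx ih => rw [map_inv, map_inv, ih]
  set J : Bool × ((Γ ⧸ H) →* Multiplicative (ZMod 2)) →
      ((Γ ⧸ H) →* Multiplicative (ZMod 2)) :=
    fun p => (MonoidHom.coprod (if p.1 then ν else 1) p.2).comp S with hJ
  have hJinj : Function.Injective J := by
    intro p p' hpp
    have hcop : ∀ z, (MonoidHom.coprod (if p.1 then ν else 1) p.2) z
        = (MonoidHom.coprod (if p'.1 then ν else 1) p'.2) z := by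
      intro z
      obtain ⟨w, rfl⟩ := hSsurj z
      exact DFunLike.congr_fun hpp w
    have hb : p.1 = p'.1 := by
      have h1 := hcop (Multiplicative.ofAdd a₀, 1)
      simp only [MonoidHom.coprod_apply, map_one, mul_one] at h1
      by_cases hp : p.1 <;> by_cases hp' : p'.1 <;>
        simp only [hp, hp', if_true, if_false, MonoidHom.one_apply] at h1 ⊢
      · exact absurd h1 hνne
      · exact absurd h1.symm hνne
    have hg : p.2 = p'.2 := by
      ext γ
      have h1 := hcop (1, γ)
      simpa using h1
    exact Prod.ext hb hg
  haveI : Nonempty ((Γ ⧸ H) →* Multiplicative (ZMod 2)) := ⟨1⟩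
  have hle := Nat.card_le_card_of_injective J hJinj
  rw [Nat.card_prod] at hle
  have hb2 : Nat.card Bool = 2 := by simp [Nat.card_eq_fintype_card]
  rw [hb2] at hle
  have hpos : 0 < Nat.card ((Γ ⧸ H) →* Multiplicative (ZMod 2)) := Nat.card_pos
  omega

end WreathAux

namespace WreathAux

open Finsupp SemidirectProduct Multiplicative

variable {A B : Type*} [AddCommGroup A] [AddCommGroup B] {Γ : Type*} [Group Γ]

noncomputable def mkw (f : Γ →₀ A) (r : Γ) : WreathProduct A Γ :=
  ⟨Multiplicative.ofAdd f, r⟩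

@[simp] lemma lf_mkw (f : Γ →₀ A) (r : Γ) : lf (mkw f r) = f := rfl

@[simp] lemma right_mkw (f : Γ →₀ A) (r : Γ) : (mkw f r).right = r := rfl

lemma mkw_lf_right (x : WreathProduct A Γ) : mkw (lf x) x.right = x := by
  apply wp_ext <;> simp

/-- Projection to the first factor. -/
noncomputable def pfst : (Γ →₀ (A × B)) →+ (Γ →₀ A) :=
  Finsupp.mapRange.addMonoidHom (AddMonoidHom.fst A B)

/-- Projection to the second factor. -/
noncomputable def psnd : (Γ →₀ (A × B)) →+ (Γ →₀ B) :=
  Finsupp.mapRange.addMonoidHom (AddMonoidHom.snd A B)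

/-- Pairing. -/
noncomputable def ppair (f : Γ →₀ A) (g : Γ →₀ B) : Γ →₀ (A × B) :=
  Finsupp.mapRange.addMonoidHom (AddMonoidHom.inl A B) f +
    Finsupp.mapRange.addMonoidHom (AddMonoidHom.inr A B) g

@[simp] lemma pfst_apply (F : Γ →₀ (A × B)) (x : Γ) : pfst F x = (F x).1 := by
  simp [pfst, Finsupp.mapRange.addMonoidHom]
  exact Finsupp.mapRange_apply

@[simp] lemma psnd_apply (F : Γ →₀ (A × B)) (x : Γ) : psnd F x = (F x).2 := by
  simp [psnd, Finsupp.mapRange.addMonoidHom]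
  exact Finsupp.mapRange_apply

@[simp] lemma ppair_apply (f : Γ →₀ A) (g : Γ →₀ B) (x : Γ) : ppair f g x = (f x, g x) := by
  refine Prod.ext ?_ ?_ <;> simp [ppair, Finsupp.mapRange.addMonoidHom]

@[simp] lemma pfst_ppair (f : Γ →₀ A) (g : Γ →₀ B) : pfst (ppair f g) = f := by
  ext x; simp

@[simp] lemma psnd_ppair (f : Γ →₀ A) (g : Γ →₀ B) : psnd (ppair f g) = g := by
  ext x; simp

lemma ppair_fst_snd (F : Γ →₀ (A × B)) : ppair (pfst F) (psnd F) = F := by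
  ext x
  all_goals simp

lemma ppair_add (f f' : Γ →₀ A) (g g' : Γ →₀ B) :
    ppair (f + f') (g + g') = ppair f g + ppair f' g' := by
  ext x
  all_goals simp

@[simp] lemma ppair_zero : ppair (0 : Γ →₀ A) (0 : Γ →₀ B) = 0 := by
  ext x
  all_goals simp

lemma sm_pfst (r : Γ) (F : Γ →₀ (A × B)) : pfst (sm r F) = sm r (pfst F) := by
  ext x; simp

lemma sm_psnd (r : Γ) (F : Γ →₀ (A × B)) : psnd (sm r F) = sm r (psnd F) := by
  ext x; simp

lemma sm_ppair (r : Γ) (f : Γ →₀ A) (g : Γ →₀ B) :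
    sm r (ppair f g) = ppair (sm r f) (sm r g) := by
  ext x
  all_goals simp

/-- The underlying function of the extension. -/
noncomputable def bigPhiFun (φ : WreathProduct A Γ →* WreathProduct A Γ) (ψ : Γ →* Γ)
    (x : WreathProduct (A × B) Γ) : WreathProduct (A × B) Γ :=
  mkw (ppair (lf (φ (mkw (pfst (lf x)) x.right)))
    (Finsupp.mapDomain ψ (psnd (lf x)))) (ψ x.right)

lemma bigPhiFun_one (φ : WreathProduct A Γ →* WreathProduct A Γ) (ψ : Γ →* Γ) :
    bigPhiFun (B := B) φ ψ 1 = 1 := by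
  have h1 : mkw (pfst (lf (1 : WreathProduct (A × B) Γ)))
      (1 : WreathProduct (A × B) Γ).right = (1 : WreathProduct A Γ) := by
    apply wp_ext <;> simp
  rw [bigPhiFun, h1, map_one]
  apply wp_ext <;> simp

lemma bigPhiFun_mul (φ : WreathProduct A Γ →* WreathProduct A Γ) (ψ : Γ →* Γ)
    (hright : ∀ x : WreathProduct A Γ, (φ x).right = ψ x.right)
    (x y : WreathProduct (A × B) Γ) :
    bigPhiFun φ ψ (x * y) = bigPhiFun φ ψ x * bigPhiFun φ ψ y := by
  have hmk2 : mkw (pfst (lf x) + sm x.right (pfst (lf y))) (x.right * y.right)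
      = mkw (pfst (lf x)) x.right * mkw (pfst (lf y)) y.right := by
    apply wp_ext
    · simp
    · simp
  simp only [bigPhiFun]
  apply wp_ext
  · simp only [lf_mkw, lf_mul, right_mkw, mul_right, map_add, sm_pfst, sm_psnd,
      Finsupp.mapDomain_add, mapDomain_sm, sm_ppair]
    rw [hmk2, map_mul, lf_mul, hright, right_mkw, ppair_add]
  · simp

/-- The extension of a base-preserving endomorphism of `A ≀ Γ` to `(A × B) ≀ Γ`. -/
noncomputable def bigPhi (φ : WreathProduct A Γ →* WreathProduct A Γ) (ψ : Γ →* Γ)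
    (hright : ∀ x : WreathProduct A Γ, (φ x).right = ψ x.right) :
    WreathProduct (A × B) Γ →* WreathProduct (A × B) Γ where
  toFun := bigPhiFun φ ψ
  map_one' := bigPhiFun_one φ ψ
  map_mul' := bigPhiFun_mul φ ψ hright

lemma bigPhi_apply (φ : WreathProduct A Γ →* WreathProduct A Γ) (ψ : Γ →* Γ)
    (hright : ∀ x : WreathProduct A Γ, (φ x).right = ψ x.right)
    (x : WreathProduct (A × B) Γ) :
    bigPhi φ ψ hright x = mkw (ppair (lf (φ (mkw (pfst (lf x)) x.right)))
      (Finsupp.mapDomain ψ (psnd (lf x)))) (ψ x.right) := rfl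

theorem hopfian_factor [Infinite Γ] [Group.FG Γ]
    (h : IsHopfian (WreathProduct (A × B) Γ)) : IsHopfian (WreathProduct A Γ) := by
  intro φ hφ
  have hbase := base_preserved φ hφ
  set ψ : Γ →* Γ := rightHom.comp (φ.comp inr) with hψdef
  have hψapp : ∀ γ, ψ γ = (φ (inr γ)).right := fun _ => rfl
  have hright : ∀ x : WreathProduct A Γ, (φ x).right = ψ x.right := by
    intro x
    conv_lhs => rw [split x]
    rw [map_mul, mul_right, hbase (lf x), one_mul, hψapp]
  have hψsurj : Function.Surjective ψ := by
    intro δ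
    obtain ⟨x, hx⟩ := hφ (inr δ)
    exact ⟨x.right, by rw [← hright, hx, right_inr]⟩
  set Φ := bigPhi (B := B) φ ψ hright with hΦdef
  have hΦsurj : Function.Surjective Φ := by
    intro z
    obtain ⟨w, hw⟩ := hφ (mkw (pfst (lf z)) z.right)
    obtain ⟨g, hg⟩ := mapDomain_surjective (A := B) hψsurj (psnd (lf z))
    refine ⟨mkw (ppair (lf w) g) w.right, ?_⟩
    rw [hΦdef, bigPhi_apply]
    apply wp_ext
    · simp only [lf_mkw, right_mkw, pfst_ppair, psnd_ppair]
      rw [hg, mkw_lf_right, hw, lf_mkw, ppair_fst_snd]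
    · simp only [right_mkw]
      rw [← hright, hw, right_mkw]
  have hΦinj := h Φ hΦsurj
  intro u v huv
  have h1 : Φ (mkw (ppair (lf u) 0) u.right) = Φ (mkw (ppair (lf v) 0) v.right) := by
    rw [hΦdef, bigPhi_apply, bigPhi_apply]
    apply wp_ext
    · simp only [lf_mkw, right_mkw, pfst_ppair, psnd_ppair]
      rw [mkw_lf_right, mkw_lf_right, huv]
    · simp only [right_mkw]
      rw [← hright, ← hright, huv]
  have h2 := hΦinj h1
  have hr : u.right = v.right := by
    have h3 := congrArg SemidirectProduct.right h2
    simpa using h3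
  have hl : lf u = lf v := by
    have h3 := congrArg lf h2
    rw [lf_mkw, lf_mkw] at h3
    have h4 := congrArg pfst h3
    rwa [pfst_ppair, pfst_ppair] at h4
  exact wp_ext hl hr

/-- Functoriality of the wreath product in the abelian group. -/
noncomputable def wreathMapRange (σ : A →+ B) : WreathProduct A Γ →* WreathProduct B Γ :=
  SemidirectProduct.map
    (AddMonoidHom.toMultiplicative (Finsupp.mapRange.addMonoidHom σ)) (MonoidHom.id Γ)
    (by
      intro g
      refine MonoidHom.ext fun l => ?_
      show Multiplicative.ofAdd (Finsupp.mapRange.addMonoidHom σ (Multiplicative.toAdd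
        ((wreathAction A Γ g) l))) = _
      rw [wreathAction_apply]
      simp only [toAdd_ofAdd]
      have : Finsupp.mapRange.addMonoidHom σ (sm g l.toAdd)
          = sm g (Finsupp.mapRange.addMonoidHom σ l.toAdd) := by
        ext x
        simp [Finsupp.mapRange.addMonoidHom]
      rw [this]
      rfl)

lemma wreathMapRange_comp_eq_id (e : A ≃+ B) (x : WreathProduct A Γ) :
    wreathMapRange e.symm.toAddMonoidHom (wreathMapRange e.toAddMonoidHom x) = x := by
  apply wp_ext
  · show Multiplicative.toAdd ((wreathMapRange e.symm.toAddMonoidHom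
      (wreathMapRange e.toAddMonoidHom x)).left) = lf x
    rw [wreathMapRange, wreathMapRange, SemidirectProduct.map_left, SemidirectProduct.map_left]
    ext z
    simp [Finsupp.mapRange.addMonoidHom, lf]
    exact (Finsupp.mapRange_apply.trans (congrArg _ Finsupp.mapRange_apply)).trans
      (e.symm_apply_apply _)
  · show ((wreathMapRange e.symm.toAddMonoidHom (wreathMapRange e.toAddMonoidHom x)).right) = x.right
    rw [wreathMapRange, wreathMapRange, SemidirectProduct.map_right, SemidirectProduct.map_right]
    rfl

lemma isHopfian_of_mulEquiv {G H : Type*} [Group G] [Group H] (e : G ≃* H)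
    (hG : IsHopfian G) : IsHopfian H := by
  intro φ hφ
  have hsurj : Function.Surjective ((e.symm.toMonoidHom.comp φ).comp e.toMonoidHom) := by
    intro g
    obtain ⟨y, hy⟩ := hφ (e g)
    refine ⟨e.symm y, ?_⟩
    simp only [MonoidHom.comp_apply, MulEquiv.coe_toMonoidHom]
    rw [MulEquiv.apply_symm_apply, hy, MulEquiv.symm_apply_apply]
  have hinj := hG _ hsurj
  intro a b hab
  have h1 : ((e.symm.toMonoidHom.comp φ).comp e.toMonoidHom) (e.symm a)
      = ((e.symm.toMonoidHom.comp φ).comp e.toMonoidHom) (e.symm b) := by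
    simp only [MonoidHom.comp_apply, MulEquiv.coe_toMonoidHom]
    rw [MulEquiv.apply_symm_apply, MulEquiv.apply_symm_apply, hab]
  have h2 := hinj h1
  have := congrArg e h2
  rwa [MulEquiv.apply_symm_apply, MulEquiv.apply_symm_apply] at this

/-- Wreath products along an isomorphism of the abelian group. -/
noncomputable def wreathCongr (e : A ≃+ B) : WreathProduct A Γ ≃* WreathProduct B Γ :=
  MonoidHom.toMulEquiv (wreathMapRange e.toAddMonoidHom)
    (wreathMapRange e.symm.toAddMonoidHom)
    (by
      refine MonoidHom.ext fun x => ?_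
      exact wreathMapRange_comp_eq_id e x)
    (by
      refine MonoidHom.ext fun x => ?_
      have := wreathMapRange_comp_eq_id (Γ := Γ) e.symm x
      rw [AddEquiv.symm_symm] at this
      exact this)

end WreathAux

/-- Let `A`, `B` be abelian groups and `Γ` an infinite finitely generated group. If
`(A × B) ≀ Γ` is Hopfian, then `A ≀ Γ` and `B ≀ Γ` are Hopfian. -/
theorem wreath_product_base_factors_hopfian (A B : Type*) [AddCommGroup A]
    [AddCommGroup B] (Γ : Type*) [Group Γ] [Group.FG Γ] [Infinite Γ]
    (h : IsHopfian (WreathProduct (A × B) Γ)) :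
    IsHopfian (WreathProduct A Γ) ∧ IsHopfian (WreathProduct B Γ) := by
  constructor
  · exact WreathAux.hopfian_factor h
  · exact WreathAux.hopfian_factor
      (WreathAux.isHopfian_of_mulEquiv
        (WreathAux.wreathCongr (AddEquiv.prodComm (M := A) (N := B))) h)
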